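/- Let Λ be a countably infinite set and (a_{α,β})_{α,β∈Λ} an infinite matrix of non-negative real numbers such that max{a_{α,β}, a_{β,α}} ≥ 1 for all α, β ∈ Λ. Define S_α = ∑_{β∈Λ} a_{α,β} ∈ [0,∞]. Then for every r > 1, the sum ∑_{α∈Λ} S_α^{−r} is finite (where S_α^{−r} is interpreted as 0 when S_α = ∞). -/

import Mathlib

open scoped ENNReal

/-- Lemma 5.7: if `a` is an infinite nonnegative matrix over a countably infinite index set
with `max {a_{α,β}, a_{β,α}} ≥ 1` for all `α, β`, and `S_α = ∑_β a_{α,β}` (in `[0,∞]`),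
then `∑_α S_α^{-r} < ∞` for every `r > 1`. -/
theorem sum_row_sums_inv_rpow_lt_top {Λ : Type*} [Countable Λ] [Infinite Λ]
    (a : Λ → Λ → ℝ) (ha : ∀ α β, 0 ≤ a α β)
    (hmax : ∀ α β, 1 ≤ max (a α β) (a β α)) :
    ∀ r : ℝ, 1 < r →
      ∑' α : Λ, ((∑' β : Λ, ENNReal.ofReal (a α β))⁻¹) ^ r < ⊤ := by
  intro r hr
  have hr0 : (0:ℝ) < r := lt_trans one_pos hr
  set S : Λ → ℝ≥0∞ := fun α => ∑' β : Λ, ENNReal.ofReal (a α β) with hSdef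
  set f : Λ → ℝ≥0∞ := fun α => (S α)⁻¹ ^ r with hfdef
  have h2 : (2:ℝ≥0∞) ≠ 0 := by norm_num
  have h2' : (2:ℝ≥0∞) ≠ ⊤ := by norm_num
  -- Step 1 : S α ≥ 1
  have hS1 : ∀ α, 1 ≤ S α := by
    intro α
    have h := hmax α α
    rw [max_self] at h
    calc (1:ℝ≥0∞) ≤ ENNReal.ofReal (a α α) := by
          rw [show (1:ℝ≥0∞) = ENNReal.ofReal 1 by simp]
          exact ENNReal.ofReal_le_ofReal h
      _ ≤ S α := ENNReal.le_tsum α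
  -- Step 2 : counting lemma
  have hcount : ∀ F : Finset Λ, (F.card : ℝ≥0∞) * F.card ≤ 2 * ∑ α ∈ F, S α := by
    intro F
    have h1 : ∀ α β : Λ, (1:ℝ≥0∞) ≤ ENNReal.ofReal (a α β) + ENNReal.ofReal (a β α) := by
      intro α β
      rcases le_max_iff.mp (hmax α β) with h | h
      · calc (1:ℝ≥0∞) = ENNReal.ofReal 1 := by simp
          _ ≤ ENNReal.ofReal (a α β) := ENNReal.ofReal_le_ofReal h
          _ ≤ _ := le_self_add
      · calc (1:ℝ≥0∞) = ENNReal.ofReal 1 := by simp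
          _ ≤ ENNReal.ofReal (a β α) := ENNReal.ofReal_le_ofReal h
          _ ≤ _ := le_add_self
    calc (F.card : ℝ≥0∞) * F.card
        = ∑ _α ∈ F, ∑ _β ∈ F, (1:ℝ≥0∞) := by simp [mul_comm]
      _ ≤ ∑ α ∈ F, ∑ β ∈ F, (ENNReal.ofReal (a α β) + ENNReal.ofReal (a β α)) := by
          gcongr with α hα β hβ
          exact h1 α β
      _ = (∑ α ∈ F, ∑ β ∈ F, ENNReal.ofReal (a α β))
            + ∑ α ∈ F, ∑ β ∈ F, ENNReal.ofReal (a β α) := by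
          simp [Finset.sum_add_distrib]
      _ = 2 * ∑ α ∈ F, ∑ β ∈ F, ENNReal.ofReal (a α β) := by
          rw [Finset.sum_comm (γ := Λ) (s := F) (t := F)
            (f := fun α β => ENNReal.ofReal (a β α))]
          ring
      _ ≤ 2 * ∑ α ∈ F, S α := by
          gcongr with α hα
          exact ENNReal.sum_le_tsum F
  -- card bound for finsets in a sublevel set
  have hcard : ∀ (F : Finset Λ) (n : ℕ), (∀ α ∈ F, S α < 2 ^ (n+1)) →
      (F.card : ℝ≥0∞) ≤ 2 ^ (n+2) := by
    intro F n hF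
    rcases eq_or_ne F.card 0 with h0 | h0
    · simp [h0]
    have hle : (F.card : ℝ≥0∞) * F.card ≤ (2 ^ (n+2) : ℝ≥0∞) * F.card := by
      calc (F.card : ℝ≥0∞) * F.card ≤ 2 * ∑ α ∈ F, S α := hcount F
        _ ≤ 2 * ∑ _α ∈ F, (2:ℝ≥0∞) ^ (n+1) := by
            gcongr with α hα
            exact (hF α hα).le
        _ = (2 ^ (n+2) : ℝ≥0∞) * F.card := by
            rw [Finset.sum_const, nsmul_eq_mul]
            ring
    have hc0 : (F.card : ℝ≥0∞) ≠ 0 := by exact_mod_cast h0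
    have hct : (F.card : ℝ≥0∞) ≠ ⊤ := ENNReal.natCast_ne_top _
    exact (ENNReal.mul_le_mul_iff_left hc0 hct).mp hle
  -- layers
  set L : ℕ → Set Λ := fun n => {α | 2 ^ n ≤ S α ∧ S α < 2 ^ (n+1)} with hLdef
  have hLfin : ∀ n, (L n).Finite := by
    intro n
    by_contra hinf
    obtain ⟨F, hFsub, hFcard⟩ := Set.Infinite.exists_subset_card_eq hinf (2 ^ (n+3))
    have hle := hcard F n (fun α hα => (hFsub hα).2)
    rw [hFcard] at hle
    have h23 : (2:ℕ) ^ (n+3) ≤ 2 ^ (n+2) := by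
      have h' : (((2:ℕ) ^ (n+3) : ℕ) : ℝ≥0∞) ≤ (((2:ℕ) ^ (n+2) : ℕ) : ℝ≥0∞) := by
        push_cast
        exact_mod_cast hle
      exact_mod_cast h'
    have : (2:ℕ) ^ (n+2) < 2 ^ (n+3) := Nat.pow_lt_pow_right one_lt_two (by omega)
    omega
  -- card of each layer
  have hLcard : ∀ n, ((hLfin n).toFinset.card : ℝ≥0∞) ≤ 2 ^ (n+2) := by
    intro n
    apply hcard _ n
    intro α hα
    exact ((hLfin n).mem_toFinset.mp hα).2
  -- f is bounded on each layer
  have hfL : ∀ n, ∀ α ∈ L n, f α ≤ (((2:ℝ≥0∞) ^ n)⁻¹) ^ r := by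
    intro n α hα
    apply ENNReal.rpow_le_rpow _ hr0.le
    exact ENNReal.inv_le_inv' hα.1
  -- per-layer sum bound
  have hsumL : ∀ n, ∑' α : L n, f α ≤ 2 ^ (n+2) * (((2:ℝ≥0∞) ^ n)⁻¹) ^ r := by
    intro n
    rw [← (hLfin n).coe_toFinset, Finset.tsum_subtype']
    calc ∑ α ∈ (hLfin n).toFinset, f α
        ≤ (hLfin n).toFinset.card • ((((2:ℝ≥0∞) ^ n)⁻¹) ^ r) := by
          apply Finset.sum_le_card_nsmul
          intro α hα
          exact hfL n α ((hLfin n).mem_toFinset.mp hα)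
      _ = ((hLfin n).toFinset.card : ℝ≥0∞) * (((2:ℝ≥0∞) ^ n)⁻¹) ^ r := by
          rw [nsmul_eq_mul]
      _ ≤ 2 ^ (n+2) * (((2:ℝ≥0∞) ^ n)⁻¹) ^ r := by
          gcongr
          exact hLcard n
  -- support of f is contained in the union of layers
  have hsupp : Function.support f ⊆ ⋃ n, L n := by
    intro α hα
    have hne : S α ≠ ⊤ := by
      intro htop
      apply hα
      simp only [hfdef, htop, ENNReal.inv_top]
      exact ENNReal.zero_rpow_of_pos hr0
    obtain ⟨N, hN⟩ := ENNReal.exists_nat_gt hne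
    have hex : ∃ m : ℕ, S α < 2 ^ (m+1) := by
      refine ⟨N, hN.trans_le ?_⟩
      calc ((N:ℝ≥0∞)) ≤ ((2 ^ N : ℕ) : ℝ≥0∞) := by
            exact_mod_cast Nat.le_of_lt (Nat.lt_two_pow_self (n := N))
        _ = (2:ℝ≥0∞) ^ N := by push_cast; ring
        _ ≤ 2 ^ (N+1) := by
            rw [pow_succ, mul_comm]
            exact le_mul_of_one_le_left (zero_le) one_le_two
    refine Set.mem_iUnion.mpr ⟨Nat.find hex, ?_, Nat.find_spec hex⟩
    rcases Nat.eq_zero_or_pos (Nat.find hex) with h0 | hpos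
    · rw [h0, pow_zero]
      exact hS1 α
    · have hk := Nat.find_min hex (m := Nat.find hex - 1) (by omega)
      have hle2 : (2:ℝ≥0∞) ^ (Nat.find hex - 1 + 1) ≤ S α := not_lt.mp hk
      rwa [Nat.sub_add_cancel hpos] at hle2
  -- the geometric term identity
  have h4 : (4:ℝ≥0∞) = 2 ^ (2:ℝ) := by
    rw [show (2:ℝ) = ((2:ℕ):ℝ) by norm_num, ENNReal.rpow_natCast]
    norm_num
  have hterm : ∀ n : ℕ, (2:ℝ≥0∞) ^ (n+2) * (((2:ℝ≥0∞) ^ n)⁻¹) ^ r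
      = 4 * ((2:ℝ≥0∞) ^ (1-r)) ^ n := by
    intro n
    rw [h4, ← ENNReal.rpow_natCast (2:ℝ≥0∞) (n+2), ← ENNReal.rpow_natCast (2:ℝ≥0∞) n,
      ← ENNReal.rpow_natCast ((2:ℝ≥0∞) ^ (1-r)) n,
      ← ENNReal.rpow_neg, ← ENNReal.rpow_mul, ← ENNReal.rpow_mul,
      ← ENNReal.rpow_add _ _ h2 h2', ← ENNReal.rpow_add _ _ h2 h2']
    congr 1
    push_cast
    ring
  -- geometric ratio is < 1
  have hclt : (2:ℝ≥0∞) ^ (1-r) < 1 :=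
    ENNReal.rpow_lt_one_of_one_lt_of_neg (by norm_num) (by linarith)
  -- final computation
  calc ∑' α : Λ, f α
      = ∑' α : (⋃ n, L n), f α := (tsum_subtype_eq_of_support_subset hsupp).symm
    _ ≤ ∑' n : ℕ, ∑' α : L n, f α := ENNReal.tsum_iUnion_le_tsum f L
    _ ≤ ∑' n : ℕ, (2:ℝ≥0∞) ^ (n+2) * (((2:ℝ≥0∞) ^ n)⁻¹) ^ r := ENNReal.tsum_le_tsum hsumL
    _ = ∑' n : ℕ, 4 * ((2:ℝ≥0∞) ^ (1-r)) ^ n := tsum_congr hterm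
    _ = 4 * ∑' n : ℕ, ((2:ℝ≥0∞) ^ (1-r)) ^ n := ENNReal.tsum_mul_left
    _ < ⊤ := by
        rw [ENNReal.tsum_geometric]
        apply ENNReal.mul_lt_top (by norm_num)
        rw [ENNReal.inv_lt_top, pos_iff_ne_zero]
        intro h0
        rw [tsub_eq_zero_iff_le] at h0
        exact absurd h0 (not_le.mpr hclt)
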